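/- Let φ: X → (−∞,+∞] be proper, W: X → 2^{X*} α-strongly monotone (α > 0), x ∈ dom W, u* ∈ X*, γ > 0, and suppose z ∈ (W + γ∂φ)^{-1}(Wx + γu*). Then L_φ(x,u*) ≥ α‖x−z‖²/γ. -/

import Mathlib

open scoped Topology

variable {X : Type*} [NormedAddCommGroup X] [NormedSpace ℝ X] [CompleteSpace X]

/-- The Haraux function of a set-valued operator `A : X → 2^{X*}`. -/
noncomputable def haraux (A : X → Set (X →L[ℝ] ℝ)) (x : X) (u : X →L[ℝ] ℝ) : EReal :=
  ⨆ (p : X × (X →L[ℝ] ℝ)) (_ : p.2 ∈ A p.1), (((p.2 - u) (x - p.1) : ℝ) : EReal)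

/-- The Fenchel conjugate of an extended-real-valued function. -/
noncomputable def fconj (f : X → EReal) (u : X →L[ℝ] ℝ) : EReal :=
  ⨆ y : X, (((u y : ℝ) : EReal) - f y)

/-- The convex subdifferential of an extended-real-valued function. -/
def subdiff (f : X → EReal) (x : X) : Set (X →L[ℝ] ℝ) :=
  {xs | ∀ y : X, ((xs (y - x) : ℝ) : EReal) + f x ≤ f y}

/-- The Fenchel–Young function `L_φ(x,u*) = φ(x) + φ*(u*) − ⟨x,u*⟩`. -/
noncomputable def fenchelYoung (f : X → EReal) (x : X) (u : X →L[ℝ] ℝ) : EReal :=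
  f x + fconj f u - ((u x : ℝ) : EReal)

/-- Theorem 3(iii): if `W` is `α`-strongly monotone and `z ∈ (W + γ∂φ)⁻¹(Wx + γu*)`,
then `L_φ(x,u*) ≥ α‖x−z‖²/γ`. -/
theorem fenchelYoung_lower_bound_strongly_monotone
    (φ : X → EReal) (hproper : (∃ w, φ w ≠ ⊤) ∧ ∀ w, φ w ≠ ⊥)
    (W : X → Set (X →L[ℝ] ℝ)) (x z : X) (u : X →L[ℝ] ℝ) (γ α : ℝ)
    (hα : 0 < α)
    (hW : ∀ ⦃y y' v v'⦄, y' ∈ W y → v' ∈ W v →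
      α * ‖y - v‖ ^ 2 ≤ (y' - v') (y - v))
    (hx : (W x).Nonempty) (hγ : 0 < γ)
    (hz : ∃ xs ∈ W x, ∃ w ∈ W z, ∃ a ∈ subdiff φ z, xs + γ • u = w + γ • a) :
    ((α * ‖x - z‖ ^ 2 / γ : ℝ) : EReal) ≤ fenchelYoung φ x u := by
  obtain ⟨xs, hxs, w, hw, a, ha, heq⟩ := hz
  -- φ z is finite
  obtain ⟨w0, hw0⟩ := hproper.1
  have hzt : φ z ≠ ⊤ := by
    intro ht
    have := ha w0
    rw [ht, EReal.coe_add_top] at this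
    exact hw0 (top_le_iff.mp this)
  have hzb : φ z ≠ ⊥ := hproper.2 z
  set r : ℝ := (φ z).toReal with hr
  have hφz : φ z = (r : EReal) := (EReal.coe_toReal hzt hzb).symm
  -- key real inequality from strong monotonicity
  have hmono := hW hxs hw
  have hdiff : xs - w = γ • (a - u) := by
    have : xs + γ • u = w + γ • a := heq
    have h := congrArg (· - (w + γ • u)) this
    calc xs - w = xs + γ • u - (w + γ • u) := by abel
      _ = w + γ • a - (w + γ • u) := h
      _ = γ • (a - u) := by module
  have hval : ((xs - w) : X →L[ℝ] ℝ) (x - z) = γ * ((a - u) (x - z)) := by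
    rw [hdiff]; simp
  have hkey : α * ‖x - z‖ ^ 2 / γ ≤ (a - u) (x - z) := by
    rw [div_le_iff₀ hγ]
    calc α * ‖x - z‖ ^ 2 ≤ (xs - w) (x - z) := hmono
      _ = (a - u) (x - z) * γ := by rw [hval]; ring
  -- lower bounds for φ x and fconj φ u
  have h1 : ((a (x - z) + r : ℝ) : EReal) ≤ φ x := by
    have := ha x
    rw [hφz] at this
    exact_mod_cast this
  have h2 : ((u z - r : ℝ) : EReal) ≤ fconj φ u := by
    have : ((u z : ℝ) : EReal) - φ z ≤ fconj φ u := le_iSup (fun y => ((u y : ℝ) : EReal) - φ y) z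
    rw [hφz] at this
    calc ((u z - r : ℝ) : EReal) = ((u z : ℝ) : EReal) - (r : EReal) := by
          rw [← EReal.coe_sub]
      _ ≤ fconj φ u := this
  have h3 : ((a (x - z) + r + (u z - r) : ℝ) : EReal) ≤ φ x + fconj φ u := by
    rw [EReal.coe_add]
    exact add_le_add h1 h2
  have h4 : ((a (x - z) + r + (u z - r) - u x : ℝ) : EReal) ≤ fenchelYoung φ x u := by
    rw [EReal.coe_sub]
    exact EReal.sub_le_sub h3 le_rfl
  refine le_trans ?_ h4
  rw [EReal.coe_le_coe_iff]
  have hux : u (x - z) = u x - u z := by rw [map_sub]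
  have hax : (a - u) (x - z) = a (x - z) - u (x - z) := by simp
  linarith [hkey]
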